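/- Let H be a real Hilbert space, E : H → ℝ Fréchet differentiable, and ξ : [0,∞) → H differentiable with ξ'(t) = −∇E(ξ(t)) for all t ≥ 0. Let γ∞ ∈ H, Z > 0, δ ∈ (0,1], and suppose the Łojasiewicz–Simon inequality holds with exponent θ = 1/2: ‖∇E(η)‖ ≥ Z (E(η) − E(γ∞))^{1/2} for all η with ‖η − γ∞‖ < δ. Assume that for all t ≥ 0 one has ‖ξ(t) − γ∞‖ < δ and E(ξ(t)) ≥ E(γ∞), and that ξ(t) → γ∞ as t → ∞. Then for all t ≥ 0: E(ξ(t)) − E(γ∞) ≤ (E(ξ(0)) − E(γ∞)) e^{−Z² t} and ‖ξ(t) − γ∞‖ ≤ (2/Z) (E(ξ(0)) − E(γ∞))^{1/2} e^{−Z² t/2}. -/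

import Mathlib

open Filter

/-- Exponential convergence rate for the gradient flow when the
Łojasiewicz–Simon inequality holds with exponent `θ = 1/2`:
`E(ξ(t)) − E(γ∞) ≤ (E(ξ(0)) − E(γ∞)) e^{−Z²t}` and
`‖ξ(t) − γ∞‖ ≤ (2/Z)(E(ξ(0)) − E(γ∞))^{1/2} e^{−Z²t/2}`. -/
theorem stmt14 {H : Type*} [NormedAddCommGroup H] [InnerProductSpace ℝ H]
    [CompleteSpace H]
    (E : H → ℝ) (hE : Differentiable ℝ E)
    (ξ : ℝ → H) (hξ : ∀ t : ℝ, 0 ≤ t → HasDerivAt ξ (-(gradient E (ξ t))) t)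
    (γlim : H) (Z δ : ℝ) (hZ : 0 < Z) (hδ : δ ∈ Set.Ioc (0:ℝ) 1)
    (hLS : ∀ η : H, ‖η - γlim‖ < δ →
      Z * (E η - E γlim) ^ ((1:ℝ)/2) ≤ ‖gradient E η‖)
    (hstay : ∀ t : ℝ, 0 ≤ t → ‖ξ t - γlim‖ < δ ∧ E γlim ≤ E (ξ t))
    (hconv : Tendsto ξ atTop (nhds γlim)) :
    ∀ t : ℝ, 0 ≤ t →
      E (ξ t) - E γlim ≤ (E (ξ 0) - E γlim) * Real.exp (-(Z ^ 2) * t)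
      ∧ ‖ξ t - γlim‖
          ≤ 2 / Z * (E (ξ 0) - E γlim) ^ ((1:ℝ)/2) * Real.exp (-(Z ^ 2) * t / 2) := by
  set f : ℝ → ℝ := fun s => E (ξ s) - E γlim with hf_def
  have hf0 : ∀ s : ℝ, 0 ≤ s → 0 ≤ f s := fun s hs => sub_nonneg.2 (hstay s hs).2
  -- the derivative of the energy along the flow
  have hfd : ∀ s : ℝ, 0 ≤ s → HasDerivAt f (-‖gradient E (ξ s)‖ ^ 2) s := by
    intro s hs
    have h1 : HasFDerivAt E (InnerProductSpace.toDual ℝ H (gradient E (ξ s))) (ξ s) :=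
      ((hE (ξ s)).hasGradientAt).hasFDerivAt
    have h2 := h1.comp_hasDerivAt s (hξ s hs)
    have h4 : (InnerProductSpace.toDual ℝ H (gradient E (ξ s))) (-(gradient E (ξ s)))
        = -‖gradient E (ξ s)‖ ^ 2 := by
      rw [InnerProductSpace.toDual_apply_apply, inner_neg_right, real_inner_self_eq_norm_sq]
    rw [h4] at h2
    simpa [hf_def] using h2.sub_const (E γlim)
  -- Łojasiewicz inequality, sqrt form
  have hLSs : ∀ s : ℝ, 0 ≤ s → Z * Real.sqrt (f s) ≤ ‖gradient E (ξ s)‖ := by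
    intro s hs
    have := hLS (ξ s) (hstay s hs).1
    rwa [← Real.sqrt_eq_rpow] at this
  -- squared form : Z^2 * f s ≤ ‖∇E‖^2
  have hLS2 : ∀ s : ℝ, 0 ≤ s → Z ^ 2 * f s ≤ ‖gradient E (ξ s)‖ ^ 2 := by
    intro s hs
    have h1 := hLSs s hs
    have h2 : (Z * Real.sqrt (f s)) ^ 2 ≤ ‖gradient E (ξ s)‖ ^ 2 :=
      pow_le_pow_left₀ (mul_nonneg hZ.le (Real.sqrt_nonneg _)) h1 2
    calc Z ^ 2 * f s = (Z * Real.sqrt (f s)) ^ 2 := by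
          rw [mul_pow, Real.sq_sqrt (hf0 s hs)]
      _ ≤ _ := h2
  -- first part : exponential decay of the energy
  have part1 : ∀ t : ℝ, 0 ≤ t → f t ≤ f 0 * Real.exp (-(Z ^ 2) * t) := by
    intro t ht
    set g : ℝ → ℝ := fun s => f s * Real.exp (Z ^ 2 * s) with hg_def
    have hgd : ∀ s : ℝ, 0 ≤ s → HasDerivAt g
        ((-‖gradient E (ξ s)‖ ^ 2 + Z ^ 2 * f s) * Real.exp (Z ^ 2 * s)) s := by
      intro s hs
      have hid : HasDerivAt (fun u : ℝ => Z ^ 2 * u) (Z ^ 2) s := by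
        simpa using (hasDerivAt_id s).const_mul (Z ^ 2)
      have he : HasDerivAt (fun u : ℝ => Real.exp (Z ^ 2 * u))
          (Real.exp (Z ^ 2 * s) * Z ^ 2) s := by
        have := (Real.hasDerivAt_exp (Z ^ 2 * s)).comp s hid
        exact this
      have := (hfd s hs).mul he
      exact this.congr_deriv (by ring)
    have hanti : AntitoneOn g (Set.Ici (0:ℝ)) := by
      apply antitoneOn_of_deriv_nonpos (convex_Ici 0)
      · intro s hs
        exact ((hgd s hs).continuousAt).continuousWithinAt
      · intro s hs
        rw [interior_Ici] at hs
        exact (hgd s (le_of_lt hs)).differentiableAt.differentiableWithinAt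
      · intro s hs
        rw [interior_Ici] at hs
        rw [(hgd s (le_of_lt hs)).deriv]
        have := hLS2 s (le_of_lt hs)
        have hle : -‖gradient E (ξ s)‖ ^ 2 + Z ^ 2 * f s ≤ 0 := by linarith
        exact mul_nonpos_of_nonpos_of_nonneg hle (Real.exp_pos _).le
    have h1 : g t ≤ g 0 := hanti Set.self_mem_Ici ht ht
    have h2 : g 0 = f 0 := by simp [hg_def]
    rw [h2] at h1
    have h3 : f t = g t * Real.exp (-(Z ^ 2) * t) := by
      rw [hg_def]
      simp only [mul_assoc, ← Real.exp_add]
      norm_num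
    rw [h3]
    exact mul_le_mul_of_nonneg_right h1 (Real.exp_pos _).le
  -- energy is antitone
  have hanti_f : AntitoneOn f (Set.Ici (0:ℝ)) := by
    apply antitoneOn_of_deriv_nonpos (convex_Ici 0)
    · intro s hs
      exact ((hfd s hs).continuousAt).continuousWithinAt
    · intro s hs
      rw [interior_Ici] at hs
      exact (hfd s (le_of_lt hs)).differentiableAt.differentiableWithinAt
    · intro s hs
      rw [interior_Ici] at hs
      rw [(hfd s (le_of_lt hs)).deriv]
      simp [sq_nonneg]
  -- if the energy hits its infimum, the flow is stationary at γlim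
  have hzero : ∀ s1 : ℝ, 0 ≤ s1 → f s1 = 0 → ξ s1 = γlim := by
    intro s1 hs1 hfs1
    have hconstf : ∀ s, s1 ≤ s → f s = 0 := by
      intro s hs
      have h1 : f s ≤ f s1 := hanti_f (Set.mem_Ici.2 hs1) (Set.mem_Ici.2 (hs1.trans hs)) hs
      have h2 : 0 ≤ f s := hf0 s (hs1.trans hs)
      linarith [hfs1 ▸ h1]
    have hgrad0 : ∀ s, s1 ≤ s → gradient E (ξ s) = 0 := by
      intro s hs
      have hud : UniqueDiffWithinAt ℝ (Set.Ici s1) s := uniqueDiffOn_Ici s1 s (Set.mem_Ici.2 hs)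
      have h1 : HasDerivWithinAt f (-‖gradient E (ξ s)‖ ^ 2) (Set.Ici s1) s :=
        (hfd s (hs1.trans hs)).hasDerivWithinAt
      have h2 : HasDerivWithinAt f 0 (Set.Ici s1) s := by
        have hc : HasDerivWithinAt (fun _ : ℝ => (0:ℝ)) 0 (Set.Ici s1) s :=
          (hasDerivWithinAt_const s _ 0)
        exact hc.congr (fun y hy => (hconstf y hy).symm ▸ rfl) ((hconstf s hs).symm ▸ rfl)
      have h3 : -‖gradient E (ξ s)‖ ^ 2 = 0 := by
        rw [← h1.derivWithin hud, h2.derivWithin hud]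
      have h4 : ‖gradient E (ξ s)‖ = 0 :=
        (pow_eq_zero_iff two_ne_zero).mp (neg_eq_zero.mp h3)
      exact norm_eq_zero.mp h4
    have hxconst : ∀ s, s1 ≤ s → ξ s = ξ s1 := by
      intro s hs
      have hcont : ContinuousOn ξ (Set.Icc s1 s) := fun u hu =>
        ((hξ u (hs1.trans hu.1)).continuousAt).continuousWithinAt
      have hder : ∀ u ∈ Set.Ico s1 s, HasDerivWithinAt ξ 0 (Set.Ici u) u := by
        intro u hu
        have h := hξ u (hs1.trans hu.1)
        rw [hgrad0 u hu.1, neg_zero] at h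
        exact h.hasDerivWithinAt
      exact constant_of_has_deriv_right_zero hcont hder s ⟨hs, le_refl s⟩
    have heq : ξ =ᶠ[atTop] fun _ => ξ s1 := by
      filter_upwards [eventually_ge_atTop s1] with s hs using hxconst s hs
    have h5 : Tendsto (fun _ : ℝ => ξ s1) atTop (nhds γlim) := hconv.congr' heq
    exact tendsto_nhds_unique tendsto_const_nhds h5
  -- main claim : distance to limit controlled by sqrt of energy gap
  have hC : ∀ t : ℝ, 0 ≤ t → ‖ξ t - γlim‖ ≤ 2 / Z * Real.sqrt (f t) := by
    intro t ht
    rcases (hf0 t ht).eq_or_lt with hft | hft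
    · rw [hzero t ht hft.symm, sub_self, norm_zero]
      positivity
    · -- f t > 0
      -- key mean-value bound, valid as long as f stays positive
      have hbound : ∀ s : ℝ, t ≤ s → (∀ u ∈ Set.Icc t s, 0 < f u) →
          ‖ξ s - ξ t‖ ≤ 2 / Z * Real.sqrt (f t) := by
        intro s hts hpos
        set B : ℝ → ℝ := fun u => 2 / Z * (Real.sqrt (f t) - Real.sqrt (f u)) with hB_def
        have hBd : ∀ u ∈ Set.Ico t s, HasDerivAt B
            (2 / Z * (‖gradient E (ξ u)‖ ^ 2 / (2 * Real.sqrt (f u)))) u := by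
          intro u hu
          have hu0 : 0 ≤ u := ht.trans hu.1
          have hfu : f u ≠ 0 := (hpos u ⟨hu.1, hu.2.le⟩).ne'
          have h1 : HasDerivAt (fun v => Real.sqrt (f v))
              (1 / (2 * Real.sqrt (f u)) * (-‖gradient E (ξ u)‖ ^ 2)) u :=
            (Real.hasDerivAt_sqrt hfu).comp u (hfd u hu0)
          have h2 := ((hasDerivAt_const u (Real.sqrt (f t))).sub h1).const_mul (2 / Z)
          exact h2.congr_deriv (by ring)
        have hcontξ : ContinuousOn (fun v => ξ v - ξ t) (Set.Icc t s) := by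
          intro u hu
          exact (((hξ u (ht.trans hu.1)).continuousAt).sub continuousAt_const).continuousWithinAt
        have hdξ : ∀ u ∈ Set.Ico t s,
            HasDerivWithinAt (fun v => ξ v - ξ t) (-(gradient E (ξ u))) (Set.Ici u) u := by
          intro u hu
          exact (((hξ u (ht.trans hu.1)).sub_const (ξ t))).hasDerivWithinAt
        have hcontB : ContinuousOn B (Set.Icc t s) := by
          apply ContinuousOn.mul continuousOn_const
          apply ContinuousOn.sub continuousOn_const
          exact Real.continuous_sqrt.comp_continuousOn
            (fun u hu => ((hfd u (ht.trans hu.1)).continuousAt).continuousWithinAt)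
        have hbound' : ∀ u ∈ Set.Ico t s, ‖-(gradient E (ξ u))‖ ≤
            2 / Z * (‖gradient E (ξ u)‖ ^ 2 / (2 * Real.sqrt (f u))) := by
          intro u hu
          have hu0 : 0 ≤ u := ht.trans hu.1
          have hfu : 0 < f u := hpos u ⟨hu.1, hu.2.le⟩
          have hsq : 0 < Real.sqrt (f u) := Real.sqrt_pos.2 hfu
          have h1 : Z * Real.sqrt (f u) ≤ ‖gradient E (ξ u)‖ := hLSs u hu0
          have h2 : Z * Real.sqrt (f u) * ‖gradient E (ξ u)‖ ≤ ‖gradient E (ξ u)‖ ^ 2 := by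
            calc Z * Real.sqrt (f u) * ‖gradient E (ξ u)‖
                ≤ ‖gradient E (ξ u)‖ * ‖gradient E (ξ u)‖ :=
                  mul_le_mul_of_nonneg_right h1 (norm_nonneg _)
              _ = ‖gradient E (ξ u)‖ ^ 2 := (sq _).symm
          have hZs : 0 < Z * Real.sqrt (f u) := mul_pos hZ hsq
          have hexp : 2 / Z * (‖gradient E (ξ u)‖ ^ 2 / (2 * Real.sqrt (f u)))
                - ‖gradient E (ξ u)‖
              = (‖gradient E (ξ u)‖ ^ 2 - Z * Real.sqrt (f u) * ‖gradient E (ξ u)‖)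
                / (Z * Real.sqrt (f u)) := by
            field_simp
          rw [norm_neg, ← sub_nonneg, hexp]
          exact div_nonneg (by linarith) hZs.le
        have happ := image_norm_le_of_norm_deriv_right_le_deriv_boundary'
          hcontξ hdξ (by simp [hB_def]) hcontB
          (fun u hu => (hBd u hu).hasDerivWithinAt) hbound'
        have h6 := happ (Set.right_mem_Icc.2 hts)
        calc ‖ξ s - ξ t‖ ≤ B s := h6
          _ ≤ 2 / Z * Real.sqrt (f t) := by
            rw [hB_def]
            have h7 : 0 ≤ Real.sqrt (f s) := Real.sqrt_nonneg _
            have h8 : (0:ℝ) ≤ 2 / Z := by positivity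
            nlinarith
      by_cases hS : ∃ s : ℝ, t ≤ s ∧ f s = 0
      · -- the energy gap vanishes in finite time
        set S : Set ℝ := {s : ℝ | t ≤ s ∧ f s = 0} with hS_def
        have hSne : S.Nonempty := hS
        have hSbdd : BddBelow S := ⟨t, fun s hs => hs.1⟩
        set s1 : ℝ := sInf S with hs1_def
        have hts1 : t ≤ s1 := le_csInf hSne (fun s hs => hs.1)
        have hfs1 : f s1 = 0 := by
          have hcl : s1 ∈ closure S := csInf_mem_closure hSne hSbdd
          have hcf : ContinuousWithinAt f S s1 :=
            ((hfd s1 (ht.trans hts1)).continuousAt).continuousWithinAt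
          have := hcf.mem_closure_image hcl
          have himg : f '' S ⊆ {0} := by
            rintro x ⟨y, hy, rfl⟩
            exact hy.2
          have h9 : closure (f '' S) ⊆ {0} :=
            closure_minimal himg isClosed_singleton
          simpa using h9 this
        have htlt : t < s1 := by
          rcases hts1.eq_or_lt with h | h
          · exact absurd (h ▸ hfs1) hft.ne'
          · exact h
        -- positivity on [t, s1)
        have hposlt : ∀ u ∈ Set.Ico t s1, 0 < f u := by
          intro u hu
          rcases (hf0 u (ht.trans hu.1)).eq_or_lt with h | h
          · exact absurd (csInf_le hSbdd ⟨hu.1, h.symm⟩) (not_le.2 hu.2)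
          · exact h
        have hb1 : ∀ u ∈ Set.Ico t s1, ‖ξ u - ξ t‖ ≤ 2 / Z * Real.sqrt (f t) := by
          intro u hu
          apply hbound u hu.1
          intro v hv
          exact hposlt v ⟨hv.1, lt_of_le_of_lt hv.2 hu.2⟩
        -- pass to the limit u → s1⁻
        have hb2 : ‖ξ s1 - ξ t‖ ≤ 2 / Z * Real.sqrt (f t) := by
          have hcont : ContinuousAt (fun u => ‖ξ u - ξ t‖) s1 :=
            (((hξ s1 (ht.trans hts1)).continuousAt).sub continuousAt_const).norm
          have htd : Tendsto (fun u => ‖ξ u - ξ t‖) (nhdsWithin s1 (Set.Iio s1))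
              (nhds ‖ξ s1 - ξ t‖) := hcont.continuousWithinAt.tendsto
          refine le_of_tendsto htd ?_
          filter_upwards [Ioo_mem_nhdsLT_of_mem (Set.mem_Ioc.2 ⟨htlt, le_refl s1⟩)] with u hu
          exact hb1 u ⟨hu.1.le, hu.2⟩
        have hξs1 : ξ s1 = γlim := hzero s1 (ht.trans hts1) hfs1
        rw [hξs1] at hb2
        rwa [norm_sub_rev]
      · -- the energy gap never vanishes
        push_neg at hS
        have hb1 : ∀ s, t ≤ s → ‖ξ s - ξ t‖ ≤ 2 / Z * Real.sqrt (f t) := by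
          intro s hs
          apply hbound s hs
          intro v hv
          exact (hf0 v (ht.trans hv.1)).lt_of_ne' (hS v hv.1)
        have htd : Tendsto (fun s => ‖ξ s - ξ t‖) atTop (nhds ‖γlim - ξ t‖) :=
          ((hconv.sub_const (ξ t)).norm)
        have hb2 : ‖γlim - ξ t‖ ≤ 2 / Z * Real.sqrt (f t) := by
          refine le_of_tendsto htd ?_
          filter_upwards [eventually_ge_atTop t] with s hs using hb1 s hs
        rwa [norm_sub_rev]
  -- assemble the two conclusions
  intro t ht
  refine ⟨part1 t ht, ?_⟩
  have h1 := hC t ht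
  have h2 : Real.sqrt (f t) ≤ Real.sqrt (f 0) * Real.exp (-(Z ^ 2) * t / 2) := by
    have h3 := Real.sqrt_le_sqrt (part1 t ht)
    rw [Real.sqrt_mul (hf0 0 le_rfl)] at h3
    have h4 : Real.sqrt (Real.exp (-(Z ^ 2) * t)) = Real.exp (-(Z ^ 2) * t / 2) := by
      conv_lhs => rw [show -(Z ^ 2) * t = -(Z ^ 2) * t / 2 + -(Z ^ 2) * t / 2 by ring]
      rw [Real.exp_add, Real.sqrt_mul_self (Real.exp_pos _).le]
    rw [h4] at h3
    exact h3
  have h5 : (0:ℝ) ≤ 2 / Z := by positivity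
  calc ‖ξ t - γlim‖ ≤ 2 / Z * Real.sqrt (f t) := h1
    _ ≤ 2 / Z * (Real.sqrt (f 0) * Real.exp (-(Z ^ 2) * t / 2)) :=
        mul_le_mul_of_nonneg_left h2 h5
    _ = 2 / Z * (E (ξ 0) - E γlim) ^ ((1:ℝ)/2) * Real.exp (-(Z ^ 2) * t / 2) := by
        rw [← Real.sqrt_eq_rpow]
        ring
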